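/- arXiv:1811.06430 — 2 statements merged into one kernel-verified Lean document; each statement's English description precedes it below -/
import Mathlib

section
/- Strict upper bounds for ascending chains of stable kernels (diagonal argument underlying the lemma on maximal test limit groups): Let Γ be a group and G a finitely generated group. For each i ∈ ℕ let (φ^i_n)_{n∈ℕ} be a stable sequence of homomorphisms G → Γ with stable kernel K_i, and assume K_i ⊊ K_{i+1} for all i (a strictly ascending chain). Then there exists a choice of indices n(i) ∈ ℕ such that the diagonal sequence (φ^i_{n(i)})_{i∈ℕ} is a stable sequence of homomorphisms G → Γ whose stable kernel K strictly contains K_i for every i ∈ ℕ. -/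
open Filter

lemma countable_of_fg (G : Type) [Group G] [Group.FG G] : Countable G := by
  have h : Monoid.FG G := (Group.fg_iff_monoid_fg (G := G)).mp ‹_›
  obtain ⟨S, hS⟩ := h.fg_top
  have hScnt : Countable {x : G // x ∈ (S : Set G)} := (S.finite_toSet.countable).to_subtype
  have hsurj : Function.Surjective
      (fun l : List {x : G // x ∈ (S : Set G)} => (l.map Subtype.val).prod) := by
    intro g
    have hg : g ∈ Submonoid.closure (S : Set G) := by rw [hS]; trivial
    obtain ⟨l, hl, hprod⟩ := Submonoid.exists_list_of_mem_closure hg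
    refine ⟨l.attach.map (fun x => ⟨x.1, hl x.1 x.2⟩), ?_⟩
    simp only [List.map_map, Function.comp_def]
    simpa using hprod
  exact hsurj.countable

/-- **Strict upper bounds for ascending chains of stable kernels** (diagonal argument behind
the lemma on maximal test limit groups).  Let `G` be finitely generated and for each `i` let
`(φ i n)_n` be a stable sequence of homomorphisms `G → Γ` whose stable kernels
`K i = {g ∣ φ i n g = 1 for n large}` form a strictly ascending chain.  Then there is a
choice of indices `nsel : ℕ → ℕ` so that the diagonal sequence `(φ i (nsel i))_i` is stable
and its stable kernel strictly contains every `K i`. -/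
theorem diagonal_stable_kernel (G Γ : Type) [Group G] [Group Γ] [Group.FG G]
    (φ : ℕ → ℕ → (G →* Γ))
    (hstable : ∀ i (g : G), (∀ᶠ n in Filter.atTop, φ i n g = 1) ∨
      (∀ᶠ n in Filter.atTop, φ i n g ≠ 1))
    (hchain : ∀ i, {g : G | ∀ᶠ n in Filter.atTop, φ i n g = 1} ⊂
      {g : G | ∀ᶠ n in Filter.atTop, φ (i + 1) n g = 1}) :
    ∃ nsel : ℕ → ℕ,
      (∀ g : G, (∀ᶠ i in Filter.atTop, φ i (nsel i) g = 1) ∨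
        (∀ᶠ i in Filter.atTop, φ i (nsel i) g ≠ 1)) ∧
      ∀ i, {g : G | ∀ᶠ n in Filter.atTop, φ i n g = 1} ⊂
        {g : G | ∀ᶠ j in Filter.atTop, φ j (nsel j) g = 1} := by
  classical
  set K : ℕ → Set G := fun i => {g : G | ∀ᶠ n in Filter.atTop, φ i n g = 1} with hK
  -- monotonicity of the chain
  have hmono : ∀ {i j : ℕ}, i ≤ j → K i ⊆ K j := by
    intro i j hij
    induction j with
    | zero => simp_all
    | succ j ih =>
      rcases Nat.lt_or_ge i (j + 1) with h | h
      · exact (ih (Nat.lt_succ_iff.mp h)).trans (hchain j).subset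
      · have : i = j + 1 := le_antisymm hij h
        subst this; exact subset_rfl
  -- countability / enumeration
  have : Countable G := countable_of_fg G
  obtain ⟨e, he⟩ := exists_surjective_nat G
  -- eventual characterization
  have hiff : ∀ i (g : G), ∀ᶠ n in atTop, (φ i n g = 1 ↔ g ∈ K i) := by
    intro i g
    rcases hstable i g with h | h
    · have hg : g ∈ K i := h
      filter_upwards [h] with n hn
      simp [hn, hg]
    · have hg : g ∉ K i := by
        intro hc
        rcases ((hc : ∀ᶠ n in atTop, φ i n g = 1).and h).exists with ⟨n, h1, h2⟩
        exact h2 h1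
      filter_upwards [h] with n hn
      simp [hn, hg]
  -- choose the diagonal indices
  have hsel : ∀ i, ∃ n, ∀ k ≤ i, (φ i n (e k) = 1 ↔ e k ∈ K i) := by
    intro i
    have : ∀ᶠ n in atTop, ∀ k ∈ Finset.range (i + 1), (φ i n (e k) = 1 ↔ e k ∈ K i) :=
      Filter.eventually_all_finset (Finset.range (i + 1)) |>.mpr
        (fun k _ => hiff i (e k))
    obtain ⟨n, hn⟩ := this.exists
    exact ⟨n, fun k hk => hn k (Finset.mem_range.mpr (Nat.lt_succ_of_le hk))⟩
  choose nsel hnsel using hsel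
  -- key property: for i ≥ index of g, diagonal value detects membership in K i
  have hkey : ∀ (g : G) (k : ℕ), e k = g → ∀ i, k ≤ i → (φ i (nsel i) g = 1 ↔ g ∈ K i) := by
    intro g k hk i hi
    have := hnsel i k hi
    rw [hk] at this
    exact this
  refine ⟨nsel, ?_, ?_⟩
  · intro g
    obtain ⟨k, hk⟩ := he g
    by_cases hmem : ∃ i, g ∈ K i
    · obtain ⟨i₀, hi₀⟩ := hmem
      left
      filter_upwards [eventually_ge_atTop (max i₀ k)] with j hj
      exact (hkey g k hk j (le_trans (le_max_right _ _) hj)).mpr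
        (hmono (le_trans (le_max_left _ _) hj) hi₀)
    · push_neg at hmem
      right
      filter_upwards [eventually_ge_atTop k] with j hj hcontra
      exact hmem j ((hkey g k hk j hj).mp hcontra)
  · intro i
    have hsub : ∀ m, K m ⊆ {g : G | ∀ᶠ j in atTop, φ j (nsel j) g = 1} := by
      intro m g hg
      obtain ⟨k, hk⟩ := he g
      filter_upwards [eventually_ge_atTop (max m k)] with j hj
      exact (hkey g k hk j (le_trans (le_max_right _ _) hj)).mpr
        (hmono (le_trans (le_max_left _ _) hj) hg)
    refine ⟨hsub i, fun hsub' => ?_⟩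
    obtain ⟨g, hg1, hg0⟩ := Set.exists_of_ssubset (hchain i)
    exact hg0 (hsub' (hsub (i + 1) hg1))
end

section
/- Small cancellation property of the test words: For every integer N ≥ 1 let W_N be the word x y x y² x y³ ⋯ x y^N x over the two-letter alphabet {x, y}, i.e. the list obtained by concatenating, for j = 1, …, N, the letter x followed by j copies of y, and then appending a final letter x. If a word u occurs as a contiguous subword (factor) of W_N at two distinct starting positions, then the length of u is at most 2N. (Since the length of W_N grows quadratically in N, this shows that the family of words w_n = x y x y² ⋯ x y^{N(n)} x with N(n) ≥ n·L(n) satisfies the small cancellation condition C′(1/n) used in the construction of test sequences.) -/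
/-- The word `W_N = x y x y² x y³ ⋯ x y^N x` over the two-letter alphabet `{x, y}`,
encoded as a list of booleans with `true = x` and `false = y`. -/
def testWord (N : ℕ) : List Bool :=
  ((List.range N).flatMap fun j => true :: List.replicate (j + 1) false) ++ [true]

namespace TWaux

/-- `pf k` is the position of the `k`-th `x` in the test word. -/
def pf : ℕ → ℕ
  | 0 => 0
  | k + 1 => pf k + k + 2

lemma pf_strictMono : StrictMono pf :=
  strictMono_nat_of_lt_succ fun k => by simp only [pf]; omega

lemma self_le_pf (k : ℕ) : k ≤ pf k := by
  induction k with
  | zero => simp [pf]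
  | succ k ih => simp only [pf]; omega

/-- The letter of the (infinite extension of the) test word at position `n`. -/
def f (n : ℕ) : Bool := decide (∃ k ≤ n, pf k = n)

lemma f_pf (k : ℕ) : f (pf k) = true := by
  simp only [f, decide_eq_true_eq]
  exact ⟨k, self_le_pf k, rfl⟩

lemma f_mid (k s : ℕ) (h1 : 1 ≤ s) (h2 : s ≤ k + 1) : f (pf k + s) = false := by
  simp only [f, decide_eq_false_iff_not]
  rintro ⟨m, -, hm⟩
  have hk : k < m := by
    by_contra h
    have := pf_strictMono.le_iff_le.mpr (not_lt.mp h)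
    omega
  have h3 : pf (k + 1) ≤ pf m := pf_strictMono.le_iff_le.mpr hk
  have h4 : pf (k + 1) = pf k + k + 2 := rfl
  omega

lemma testWord_succ (N : ℕ) :
    testWord (N + 1) = testWord N ++ (List.replicate (N + 1) false ++ [true]) := by
  simp [testWord, List.range_succ, List.flatMap_append]

lemma testWord_length (N : ℕ) : (testWord N).length = pf N + 1 := by
  induction N with
  | zero => simp [testWord, pf]
  | succ N ih =>
    rw [testWord_succ]
    simp only [List.length_append, List.length_replicate, List.length_cons,
      List.length_nil, ih]
    show pf N + 1 + (N + 1 + 1) = pf (N + 1) + 1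
    simp only [pf]; omega

lemma testWord_getElem (N n : ℕ) (h : n < (testWord N).length) :
    (testWord N)[n] = f n := by
  induction N with
  | zero =>
    have h0 : testWord 0 = [true] := by simp [testWord]
    rw [testWord_length] at h
    simp only [pf] at h
    have hn : n = 0 := by omega
    subst hn
    simp [h0]
    exact (f_pf 0).symm
  | succ N ih =>
    have hlen : (testWord N).length = pf N + 1 := testWord_length N
    rw [testWord_length] at h
    have hpf : pf (N + 1) = pf N + N + 2 := rfl
    by_cases hcase : n < (testWord N).length
    · rw [List.getElem_of_eq (testWord_succ N), List.getElem_append_left hcase]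
      exact ih hcase
    · push_neg at hcase
      rw [List.getElem_of_eq (testWord_succ N), List.getElem_append_right hcase]
      by_cases hc2 : n - (testWord N).length < N + 1
      · rw [List.getElem_append_left (by simpa using hc2), List.getElem_replicate]
        -- n = pf N + s with 1 ≤ s ≤ N + 1
        have hs : n = pf N + (n - pf N) ∧ 1 ≤ n - pf N ∧ n - pf N ≤ N + 1 := by omega
        rw [show n = pf N + (n - pf N) from hs.1]
        exact (f_mid N _ hs.2.1 hs.2.2).symm
      · have hn : n = pf (N + 1) := by omega
        rw [List.getElem_append_right
          (show (List.replicate (N + 1) (false : Bool)).length ≤ n - (testWord N).length by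
            simp; omega)]
        simp only [List.getElem_singleton]
        rw [hn]
        exact (f_pf (N + 1)).symm

/-- An occurrence of the pattern `x y^{k+1} x` in the abstract word pins down the position. -/
lemma loc (q k : ℕ) (h0 : f q = true)
    (hmid : ∀ s, 1 ≤ s → s ≤ k + 1 → f (q + s) = false)
    (h1 : f (q + (k + 2)) = true) : q = pf k := by
  simp only [f, decide_eq_true_eq] at h0 h1
  obtain ⟨m, -, hm⟩ := h0
  obtain ⟨m', -, hm'⟩ := h1
  have hmm : m < m' := by
    by_contra h
    have := pf_strictMono.le_iff_le.mpr (not_lt.mp h)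
    omega
  have h2 : pf (m + 1) ≤ pf m' := pf_strictMono.le_iff_le.mpr hmm
  have h3 : pf (m + 1) = pf m + m + 2 := rfl
  have hmk : m ≤ k := by omega
  rcases eq_or_lt_of_le hmk with h | h
  · exact (h ▸ hm).symm
  · exfalso
    have hfmid := hmid (m + 2) (by omega) (by omega)
    have heq : q + (m + 2) = pf (m + 1) := by omega
    rw [heq, f_pf (m + 1)] at hfmid
    exact Bool.true_eq_false.mp hfmid

lemma key (N len i j : ℕ) (hN : 1 ≤ N) (hij : i ≠ j)
    (hi : i + len ≤ pf N + 1) (hj : j + len ≤ pf N + 1)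
    (heq : ∀ t, t < len → f (i + t) = f (j + t)) : len ≤ 2 * N := by
  by_contra hlen
  push_neg at hlen
  have hiN : i ≤ pf N := by omega
  have hex : ∃ k, i ≤ pf k := ⟨N, hiN⟩
  have hik : i ≤ pf (Nat.find hex) := Nat.find_spec hex
  set k := Nat.find hex with hkdef
  have hkN : k ≤ N := Nat.find_min' hex hiN
  obtain ⟨a, ha⟩ : ∃ a, i + a = pf k := ⟨pf k - i, by omega⟩
  have hak : a ≤ k := by
    cases hk : k with
    | zero => rw [hk] at ha; simp only [pf] at ha; omega
    | succ k' =>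
      have hmin : ¬ i ≤ pf k' := Nat.find_min hex (by omega)
      have h3 : pf (k' + 1) = pf k' + k' + 2 := rfl
      rw [hk] at ha
      omega
  have hkN' : k + 1 ≤ N := by
    rcases eq_or_lt_of_le hkN with h | h
    · exfalso; rw [h] at ha; omega
    · omega
  have hq : j + a = pf k := by
    apply loc
    · have h1 := heq a (by omega)
      rw [ha] at h1
      rw [← h1]
      exact f_pf k
    · intro s h1 h2
      rw [Nat.add_assoc, ← heq (a + s) (by omega), ← Nat.add_assoc, ha]
      exact f_mid k s h1 h2
    · have h4 : pf k + (k + 2) = pf (k + 1) := by simp only [pf]; omega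
      rw [Nat.add_assoc, ← heq (a + (k + 2)) (by omega), ← Nat.add_assoc, ha, h4]
      exact f_pf (k + 1)
  exact hij (by omega)

end TWaux

/-- **Small cancellation property of the test words.** If a word `u` occurs as a contiguous
subword (factor) of `W_N = x y x y² ⋯ x y^N x` at two distinct starting positions, then
`u` has length at most `2N`.  (Since `|W_N|` grows quadratically in `N`, the test words
`w_n = x y x y² ⋯ x y^{N(n)} x` with `N(n) ≥ n·L(n)` satisfy `C′(1/n)`.) -/
theorem testWord_small_cancellation (N : ℕ) (hN : 1 ≤ N) (u : List Bool) (i j : ℕ)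
    (hij : i ≠ j) (hi : u <+: (testWord N).drop i) (hj : u <+: (testWord N).drop j) :
    u.length ≤ 2 * N := by
  rcases Nat.eq_zero_or_pos u.length with h0 | hpos
  · omega
  have hlenW : (testWord N).length = TWaux.pf N + 1 := TWaux.testWord_length N
  have hilen : i + u.length ≤ TWaux.pf N + 1 := by
    have := hi.length_le
    rw [List.length_drop] at this
    omega
  have hjlen : j + u.length ≤ TWaux.pf N + 1 := by
    have := hj.length_le
    rw [List.length_drop] at this
    omega
  apply TWaux.key N u.length i j hN hij hilen hjlen
  intro t ht
  have hti : i + t < (testWord N).length := by omega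
  have htj : j + t < (testWord N).length := by omega
  have e1 : ((testWord N).drop i)[t]'(by rw [List.length_drop]; omega) = u[t]'ht :=
    (hi.getElem ht).symm
  have e2 : ((testWord N).drop j)[t]'(by rw [List.length_drop]; omega) = u[t]'ht :=
    (hj.getElem ht).symm
  rw [List.getElem_drop] at e1 e2
  rw [← TWaux.testWord_getElem N (i + t) hti, ← TWaux.testWord_getElem N (j + t) htj,
    e1, e2]
end
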